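/- (Cerveau–Déserti) Let f ∈ Bir(ℙ²) be an element of the de Jonquières group acting trivially on the basis of the fibration, i.e. a ℂ-algebra automorphism of ℂ(x,y) with f(y) = y. Then either every ψ ∈ Bir(ℙ²) commuting with f maps the subfield ℂ(y) onto itself (i.e. the centralizer of f in Bir(ℙ²) is contained in the de Jonquières group dJ), or f has finite order. -/

import Mathlib

noncomputable section

open MvPolynomial

/-- The field ℂ(x,y) of rational functions in two variables, realized as the fraction
field of the polynomial ring ℂ[x,y]. -/
abbrev K2 : Type := FractionRing (MvPolynomial (Fin 2) ℂ)

/-- The Cremona group Bir(ℙ²), identified with the group (under composition) of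
ℂ-algebra automorphisms of the field ℂ(x,y). -/
abbrev Cremona : Type := K2 ≃ₐ[ℂ] K2

/-- The rational function x. -/
def xx : K2 := algebraMap (MvPolynomial (Fin 2) ℂ) K2 (X 0)

/-- The rational function y. -/
def yy : K2 := algebraMap (MvPolynomial (Fin 2) ℂ) K2 (X 1)

/-- Constants, viewed inside ℂ(x,y). -/
def cC (c : ℂ) : K2 := algebraMap ℂ K2 c

/-- The subfield ℂ(y) of ℂ(x,y). -/
def Cy : IntermediateField ℂ K2 := IntermediateField.adjoin ℂ {yy}

open IntermediateField Polynomial in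
/-- If `z ∈ F(t)` and `z ∉ F`, then `t` is algebraic over `F(z)`. -/
theorem aux_isAlgebraic_adjoin {F K : Type*} [Field F] [Field K] [Algebra F K] {t z : K}
    (hzt : z ∈ IntermediateField.adjoin F {t}) (hz : z ∉ (⊥ : IntermediateField F K)) :
    IsAlgebraic (IntermediateField.adjoin F {z}) t := by
  obtain ⟨p, q, hpq⟩ := (IntermediateField.mem_adjoin_simple_iff F z).1 hzt
  set L : IntermediateField F K := IntermediateField.adjoin F {z} with hL
  have hzL : z ∈ L := IntermediateField.mem_adjoin_simple_self F z
  have hq : Polynomial.aeval t q ≠ 0 := by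
    intro h
    rw [h, div_zero] at hpq
    exact hz (hpq ▸ zero_mem _)
  set zL : L := ⟨z, hzL⟩ with hzLdef
  set r : Polynomial L := p.map (algebraMap F L) - Polynomial.C zL * q.map (algebraMap F L)
    with hr
  refine ⟨r, ?_, ?_⟩
  · intro h0
    rw [hr, sub_eq_zero] at h0
    have hqne : q ≠ 0 := fun h => hq (by rw [h, map_zero])
    have hex : ∃ i, q.coeff i ≠ 0 := by
      by_contra hall
      push_neg at hall
      exact hqne (Polynomial.ext fun n => by simp [hall n])
    obtain ⟨i, hi⟩ := hex
    have := congrArg (fun s => (s.coeff i : K)) h0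
    simp only [Polynomial.coeff_map, Polynomial.coeff_C_mul] at this
    -- this : algebraMap F L (p.coeff i) = zL * algebraMap F L (q.coeff i), coerced to K
    have hK : algebraMap F K (p.coeff i) = z * algebraMap F K (q.coeff i) := by
      have h1 : ((algebraMap F L (p.coeff i) : L) : K) = algebraMap F K (p.coeff i) := by
        rw [IsScalarTower.algebraMap_apply F L K]; rfl
      have h2 : ((algebraMap F L (q.coeff i) : L) : K) = algebraMap F K (q.coeff i) := by
        rw [IsScalarTower.algebraMap_apply F L K]; rfl
      rw [← h1, ← h2]
      simpa using this
    have hqi : algebraMap F K (q.coeff i) ≠ 0 := fun h => hi (by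
      exact (map_eq_zero_iff _ (algebraMap F K).injective).1 h)
    have : z = algebraMap F K (p.coeff i / q.coeff i) := by
      rw [map_div₀, eq_div_iff hqi, hK]
    exact hz (IntermediateField.mem_bot.2 ⟨_, this.symm⟩)
  · have h1 : Polynomial.aeval t (p.map (algebraMap F L)) = Polynomial.aeval t p := by
      rw [Polynomial.aeval_map_algebraMap]
    have h2 : Polynomial.aeval t (q.map (algebraMap F L)) = Polynomial.aeval t q := by
      rw [Polynomial.aeval_map_algebraMap]
    have hz' : z * Polynomial.aeval t q = Polynomial.aeval t p := by
      rw [hpq, div_mul_cancel₀ _ hq]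
    rw [hr, map_sub, map_mul, h1, h2, Polynomial.aeval_C]
    show Polynomial.aeval t p - (zL : K) * Polynomial.aeval t q = 0
    rw [← hz', hzLdef]
    ring

/-- Every polynomial, viewed in K2, lies in the subfield generated by `xx` and `yy`. -/
theorem aux_map_mem_adjoin (p : MvPolynomial (Fin 2) ℂ) :
    algebraMap (MvPolynomial (Fin 2) ℂ) K2 p ∈
      IntermediateField.adjoin ℂ ({xx, yy} : Set K2) := by
  induction p using MvPolynomial.induction_on with
  | C c =>
    rw [← MvPolynomial.algebraMap_eq, ← IsScalarTower.algebraMap_apply ℂ (MvPolynomial (Fin 2) ℂ) K2]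
    exact (IntermediateField.adjoin ℂ ({xx, yy} : Set K2)).algebraMap_mem c
  | add p q hp hq => rw [RingHom.map_add]; exact add_mem hp hq
  | mul_X p i hp =>
    rw [RingHom.map_mul]
    refine mul_mem hp ?_
    fin_cases i
    · exact IntermediateField.subset_adjoin ℂ _ (Set.mem_insert _ _)
    · exact IntermediateField.subset_adjoin ℂ _ (Set.mem_insert_of_mem _ rfl)

/-- `ℂ(x,y)` is generated by `xx` and `yy`. -/
theorem aux_adjoin_top : IntermediateField.adjoin ℂ ({xx, yy} : Set K2) = ⊤ := by
  rw [eq_top_iff]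
  rintro a -
  obtain ⟨p, q, -, rfl⟩ := IsFractionRing.div_surjective (A := MvPolynomial (Fin 2) ℂ) a
  exact div_mem (aux_map_mem_adjoin p) (aux_map_mem_adjoin q)

/-- `ℂ(x,y)` is generated over `ℂ(y)` by `xx`. -/
theorem aux_Cy_adjoin_top : IntermediateField.adjoin (↥Cy) ({xx} : Set K2) = ⊤ := by
  apply IntermediateField.restrictScalars_injective ℂ
  rw [IntermediateField.restrictScalars_top]
  show (IntermediateField.adjoin (↥(IntermediateField.adjoin ℂ ({yy} : Set K2)))
      ({xx} : Set K2)).restrictScalars ℂ = ⊤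
  rw [IntermediateField.adjoin_adjoin_left, Set.union_comm]
  exact aux_adjoin_top

/-- The fixed field of an element of the Cremona group. -/
def Fixf (f : Cremona) : IntermediateField ℂ K2 where
  carrier := {z | f z = z}
  mul_mem' := fun {a b} ha hb => by
    simp only [Set.mem_setOf_eq, map_mul] at *
    rw [ha, hb]
  one_mem' := map_one f
  add_mem' := fun {a b} ha hb => by
    simp only [Set.mem_setOf_eq, map_add] at *
    rw [ha, hb]
  zero_mem' := map_zero f
  algebraMap_mem' := fun c => f.commutes c
  inv_mem' := fun x hx => by
    simp only [Set.mem_setOf_eq, map_inv₀] at *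
    rw [hx]

theorem mem_Fixf {f : Cremona} {z : K2} : z ∈ Fixf f ↔ f z = z := Iff.rfl

set_option maxHeartbeats 1000000 in
set_option synthInstance.maxHeartbeats 400000 in
/-- (Cerveau–Déserti.) Let `f ∈ Bir(ℙ²)` preserve the rational fibration `y = cst` with
trivial action on the basis, i.e. `f(y) = y`.  Then either every `ψ ∈ Bir(ℙ²)` commuting
with `f` maps the subfield ℂ(y) onto itself (i.e. the centralizer of `f` is contained in
the de Jonquières group), or `f` has finite order. -/
theorem centralizer_in_deJonquieres_or_periodic (f : Cremona) (hf : f yy = yy) :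
    (∀ ψ : Cremona, Commute ψ f → (fun z => ψ z) '' (Cy : Set K2) = (Cy : Set K2)) ∨
    IsOfFinOrder f := by
  have hCyFix : Cy ≤ Fixf f := by
    rw [Cy, IntermediateField.adjoin_le_iff, Set.singleton_subset_iff]
    exact hf
  by_cases hC : ∀ z : K2, f z = z → z ∈ Cy
  · -- the fixed field is exactly ℂ(y); every commuting ψ preserves it
    left
    intro ψ hcomm
    apply Set.Subset.antisymm
    · rintro _ ⟨w, hw, rfl⟩
      apply hC
      have h1 : ψ (f w) = f (ψ w) := by
        have := congrArg (fun g => g w) hcomm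
        simpa [AlgEquiv.mul_apply] using this
      have h2 : f w = w := hCyFix hw
      rw [h2] at h1
      exact h1.symm
    · intro w hw
      refine ⟨ψ⁻¹ w, ?_, ?_⟩
      · apply hC
        have hcomm' : Commute ψ⁻¹ f := hcomm.inv_left
        have h1 : ψ⁻¹ (f w) = f (ψ⁻¹ w) := by
          have := congrArg (fun g => g w) hcomm'
          simpa [AlgEquiv.mul_apply] using this
        have h2 : f w = w := hCyFix hw
        rw [h2] at h1
        exact h1.symm
      · exact ψ.apply_symm_apply w
  · -- some z ∉ ℂ(y) is fixed by f ; then f has finite order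
    right
    push_neg at hC
    obtain ⟨z, hz1, hz2⟩ := hC
    set L0 : IntermediateField (↥Cy) K2 := IntermediateField.adjoin (↥Cy) {z} with hL0
    have hzt : z ∈ IntermediateField.adjoin (↥Cy) ({xx} : Set K2) := by
      rw [aux_Cy_adjoin_top]; trivial
    have hzb : z ∉ (⊥ : IntermediateField (↥Cy) K2) := by
      intro h
      obtain ⟨c, hc⟩ := IntermediateField.mem_bot.1 h
      exact hz2 (hc ▸ c.2)
    have halg : IsAlgebraic (↥L0) xx := aux_isAlgebraic_adjoin hzt hzb
    have hint : IsIntegral (↥L0) xx := halg.isIntegral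
    have hfd : FiniteDimensional (↥L0) (↥(IntermediateField.adjoin (↥L0) ({xx} : Set K2))) :=
      IntermediateField.adjoin.finiteDimensional hint
    have htop : IntermediateField.adjoin (↥L0) ({xx} : Set K2) = ⊤ := by
      apply IntermediateField.restrictScalars_injective (↥Cy)
      rw [IntermediateField.restrictScalars_top, hL0, IntermediateField.adjoin_adjoin_left]
      rw [eq_top_iff, ← aux_Cy_adjoin_top]
      exact IntermediateField.adjoin.mono _ _ _ Set.subset_union_right
    have hfd2 : FiniteDimensional (↥L0) K2 := by
      have e : (↥(IntermediateField.adjoin (↥L0) ({xx} : Set K2))) ≃ₐ[↥L0] K2 :=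
        (IntermediateField.equivOfEq htop).trans IntermediateField.topEquiv
      exact LinearEquiv.finiteDimensional e.toLinearEquiv
    -- f fixes L0 pointwise
    have hL0fix : ∀ w : K2, w ∈ L0 → f w = w := by
      have hle : L0 ≤ IntermediateField.extendScalars hCyFix := by
        rw [hL0, IntermediateField.adjoin_le_iff, Set.singleton_subset_iff]
        exact hz1
      intro w hw
      exact hle hw
    -- f as an L0-algebra automorphism
    have fHatDef : K2 ≃ₐ[↥L0] K2 := by
      refine AlgEquiv.ofRingEquiv (f := f.toRingEquiv) fun w => ?_
      show f ((algebraMap (↥L0) K2) w) = algebraMap (↥L0) K2 w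
      exact hL0fix w w.2
    set fHat : K2 ≃ₐ[↥L0] K2 :=
      AlgEquiv.ofRingEquiv (f := f.toRingEquiv)
        (fun w => hL0fix w w.2) with hfHat
    have hfin : Finite (K2 ≃ₐ[↥L0] K2) := by
      have := AlgEquiv.fintype (↥L0) K2
      exact Finite.of_fintype _
    have hford : IsOfFinOrder fHat := isOfFinOrder_of_finite fHat
    obtain ⟨n, hn, hfn⟩ := isOfFinOrder_iff_pow_eq_one.1 hford
    have key : ∀ m : ℕ, ∀ w : K2, (fHat ^ m) w = (f ^ m) w := by
      intro m
      induction m with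
      | zero => intro w; simp
      | succ k ih =>
        intro w
        rw [pow_succ, pow_succ, AlgEquiv.mul_apply, AlgEquiv.mul_apply]
        have : fHat w = f w := rfl
        rw [this, ih]
    rw [isOfFinOrder_iff_pow_eq_one]
    refine ⟨n, hn, ?_⟩
    ext w
    have := key n w
    rw [hfn] at this
    simpa using this.symm
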